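/- arXiv:1811.06381 — 6 statements merged into one kernel-verified Lean document; each statement's English description precedes it below -/
import Mathlib

section
/- Let K be a field, q ∈ K nonzero, and s ∈ K with s² = q. The family of monomials x^k · θ^l · y^m, indexed by (k, l, m) ∈ ℕ × {0, 1} × ℕ (where x, θ, y denote the images of the generators in the quotient), is a K-vector-space basis of the algebra O(SP_q^{2|1}). -/
/-- The defining relations of the quantum symplectic superspace algebra
`O(SP_q^{2|1})`: generator `0` is `x`, generator `1` is `θ`, generator `2` is `y`.
The relations are `xθ = qθx`, `xy = q²yx`, `yθ = q⁻¹θy`, `θ² = s(q-1)yx`. -/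
inductive SPRel {K : Type*} [Field K] (q s : K) :
    FreeAlgebra K (Fin 3) → FreeAlgebra K (Fin 3) → Prop
  | xθ : SPRel q s (FreeAlgebra.ι K 0 * FreeAlgebra.ι K 1)
      (q • (FreeAlgebra.ι K 1 * FreeAlgebra.ι K 0))
  | xy : SPRel q s (FreeAlgebra.ι K 0 * FreeAlgebra.ι K 2)
      ((q ^ 2) • (FreeAlgebra.ι K 2 * FreeAlgebra.ι K 0))
  | yθ : SPRel q s (FreeAlgebra.ι K 2 * FreeAlgebra.ι K 1)
      (q⁻¹ • (FreeAlgebra.ι K 1 * FreeAlgebra.ι K 2))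
  | θθ : SPRel q s (FreeAlgebra.ι K 1 * FreeAlgebra.ι K 1)
      ((s * (q - 1)) • (FreeAlgebra.ι K 2 * FreeAlgebra.ι K 0))

namespace SPAux

open Finsupp

variable {K : Type*} [Field K] (q s : K)

abbrev V (K : Type*) [Field K] : Type _ := (ℕ × Fin 2 × ℕ) →₀ K

noncomputable def Xop : Module.End K (V K) :=
  Finsupp.linearCombination K (fun p : ℕ × Fin 2 × ℕ => Finsupp.single (p.1 + 1, p.2) (1 : K))

noncomputable def Yop : Module.End K (V K) :=
  Finsupp.linearCombination K (fun p : ℕ × Fin 2 × ℕ =>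
    (q⁻¹ ^ (2 * p.1 + (p.2.1 : ℕ))) • Finsupp.single (p.1, p.2.1, p.2.2 + 1) (1 : K))

noncomputable def Top : Module.End K (V K) :=
  Finsupp.linearCombination K (fun p : ℕ × Fin 2 × ℕ =>
    if p.2.1 = 0 then (q⁻¹ ^ p.1) • Finsupp.single (p.1, 1, p.2.2) (1 : K)
    else (q⁻¹ ^ (p.1 + 2) * (s * (q - 1))) • Finsupp.single (p.1 + 1, 0, p.2.2 + 1) (1 : K))

lemma ext1 {W : Type*} [AddCommMonoid W] [Module K W] {f g : V K →ₗ[K] W}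
    (h : ∀ p : ℕ × Fin 2 × ℕ, f (Finsupp.single p 1) = g (Finsupp.single p 1)) : f = g := by
  apply Finsupp.lhom_ext
  intro a b
  have hb : (Finsupp.single a b : V K) = b • Finsupp.single a 1 := by
    rw [Finsupp.smul_single, smul_eq_mul, mul_one]
  rw [hb, map_smul, map_smul, h]

lemma X_single' (k : ℕ) (l : Fin 2) (m : ℕ) (c : K) :
    Xop (Finsupp.single (k, l, m) c) = Finsupp.single (k + 1, l, m) c := by
  rw [Xop, linearCombination_single, Finsupp.smul_single, smul_eq_mul, mul_one]

lemma Y_single' (k : ℕ) (l : Fin 2) (m : ℕ) (c : K) :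
    Yop q (Finsupp.single (k, l, m) c) =
      Finsupp.single (k, l, m + 1) (c * q⁻¹ ^ (2 * k + (l : ℕ))) := by
  rw [Yop, linearCombination_single, smul_smul, Finsupp.smul_single, smul_eq_mul, mul_one]

lemma T_single0' (k m : ℕ) (c : K) :
    Top q s (Finsupp.single (k, (0 : Fin 2), m) c) =
      Finsupp.single (k, 1, m) (c * q⁻¹ ^ k) := by
  rw [Top, linearCombination_single, if_pos rfl, smul_smul, Finsupp.smul_single, smul_eq_mul,
    mul_one]

lemma T_single1' (k m : ℕ) (c : K) :
    Top q s (Finsupp.single (k, (1 : Fin 2), m) c) =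
      Finsupp.single (k + 1, 0, m + 1) (c * (q⁻¹ ^ (k + 2) * (s * (q - 1)))) := by
  rw [Top, linearCombination_single]
  rw [if_neg (show ¬((k, (1 : Fin 2), m)).2.1 = 0 from by simp)]
  rw [smul_smul, Finsupp.smul_single, smul_eq_mul, mul_one]

lemma relXT (hq : q ≠ 0) : Xop * Top q s = q • (Top q s * Xop (K := K)) := by
  apply ext1
  rintro ⟨k, l, m⟩
  fin_cases l
  all_goals
    simp only [Module.End.mul_apply, LinearMap.smul_apply, Fin.zero_eta, Fin.mk_one, X_single', T_single0', T_single1',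
      Finsupp.smul_single, smul_eq_mul]
    congr 1
    field_simp
    first | ring1 | (left; ring1) | (left; trivial) | skip
  all_goals first | ring1 | (left; ring1) | (left; trivial) | (simp only [one_div_pow, Fin.val_zero, Fin.val_one, Fin.isValue]; field_simp; ring)

lemma relXY (hq : q ≠ 0) : Xop * Yop q = (q ^ 2) • (Yop q * Xop (K := K)) := by
  apply ext1
  rintro ⟨k, l, m⟩
  fin_cases l
  all_goals
    simp only [Module.End.mul_apply, LinearMap.smul_apply, X_single', Y_single',
      Finsupp.smul_single, smul_eq_mul]
    congr 1
    field_simp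
    first | ring1 | (left; ring1) | (left; trivial) | skip
  all_goals first | ring1 | (left; ring1) | (left; trivial) | (simp only [one_div_pow, Fin.val_zero, Fin.val_one, Fin.isValue]; field_simp; ring)

lemma relYT (hq : q ≠ 0) : Yop q * Top q s = q⁻¹ • (Top q s * Yop (K := K) q) := by
  apply ext1
  rintro ⟨k, l, m⟩
  fin_cases l
  all_goals
    simp only [Module.End.mul_apply, LinearMap.smul_apply, Fin.zero_eta, Fin.mk_one, Y_single', T_single0', T_single1',
      Finsupp.smul_single, smul_eq_mul]
    congr 1
    field_simp
    first | ring1 | (left; ring1) | (left; trivial) | skip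
  all_goals first | ring1 | (left; ring1) | (left; trivial) | (simp only [one_div_pow, Fin.val_zero, Fin.val_one, Fin.isValue]; field_simp; ring)

lemma relTT (hq : q ≠ 0) : Top q s * Top q s = (s * (q - 1)) • (Yop q * Xop (K := K)) := by
  apply ext1
  rintro ⟨k, l, m⟩
  fin_cases l
  all_goals
    simp only [Module.End.mul_apply, LinearMap.smul_apply, Fin.zero_eta, Fin.mk_one, X_single', Y_single', T_single0',
      T_single1', Finsupp.smul_single, smul_eq_mul]
    congr 1
    field_simp
    first | ring1 | (left; ring1) | (left; trivial) | skip
  all_goals first | ring1 | (left; ring1) | (left; trivial) | (simp only [one_div_pow, Fin.val_zero, Fin.val_one, Fin.isValue]; field_simp; ring)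

/-- The representation of the quotient algebra on `V K`. -/
noncomputable def rep (hq : q ≠ 0) : RingQuot (SPRel q s) →ₐ[K] Module.End K (V K) :=
  RingQuot.liftAlgHom K ⟨FreeAlgebra.lift K ![Xop, Top q s, Yop q], by
    rintro a b ⟨⟩ <;>
      simp only [map_mul, map_smul, FreeAlgebra.lift_ι_apply, Matrix.cons_val_zero,
        Matrix.cons_val_one, Matrix.head_cons]
    · exact relXT q s hq
    · exact relXY q hq
    · exact relYT q s hq
    · exact relTT q s hq⟩

noncomputable def gx : RingQuot (SPRel q s) :=
  RingQuot.mkAlgHom K (SPRel q s) (FreeAlgebra.ι K 0)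

noncomputable def gθ : RingQuot (SPRel q s) :=
  RingQuot.mkAlgHom K (SPRel q s) (FreeAlgebra.ι K 1)

noncomputable def gy : RingQuot (SPRel q s) :=
  RingQuot.mkAlgHom K (SPRel q s) (FreeAlgebra.ι K 2)

lemma rep_gx (hq : q ≠ 0) : rep q s hq (gx q s) = Xop := by
  rw [rep, gx, RingQuot.liftAlgHom_mkAlgHom_apply, FreeAlgebra.lift_ι_apply]
  rfl

lemma rep_gθ (hq : q ≠ 0) : rep q s hq (gθ q s) = Top q s := by
  rw [rep, gθ, RingQuot.liftAlgHom_mkAlgHom_apply, FreeAlgebra.lift_ι_apply]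
  rfl

lemma rep_gy (hq : q ≠ 0) : rep q s hq (gy q s) = Yop q := by
  rw [rep, gy, RingQuot.liftAlgHom_mkAlgHom_apply, FreeAlgebra.lift_ι_apply]
  rfl

/-- Monomials. -/
noncomputable def mon (p : ℕ × Fin 2 × ℕ) : RingQuot (SPRel q s) :=
  gx q s ^ p.1 * gθ q s ^ (p.2.1 : ℕ) * gy q s ^ p.2.2

/-- Evaluation at the vacuum vector. -/
noncomputable def evl (hq : q ≠ 0) : RingQuot (SPRel q s) →ₗ[K] V K where
  toFun a := rep q s hq a (Finsupp.single (0, 0, 0) 1)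
  map_add' a b := by simp only [map_add, LinearMap.add_apply]
  map_smul' c a := by simp only [map_smul, LinearMap.smul_apply, RingHom.id_apply]

lemma Xpow_single (k a : ℕ) (l : Fin 2) (m : ℕ) :
    (Xop ^ k : Module.End K (V K)) (Finsupp.single (a, l, m) 1) =
      Finsupp.single (a + k, l, m) 1 := by
  induction k generalizing a with
  | zero => simp
  | succ n ih =>
    rw [pow_succ, Module.End.mul_apply, X_single', ih, show a + 1 + n = a + (n + 1) by omega]

lemma Ypow_single (m : ℕ) :
    ((Yop q) ^ m : Module.End K (V K)) (Finsupp.single (0, 0, 0) 1) =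
      Finsupp.single (0, 0, m) 1 := by
  induction m with
  | zero => simp
  | succ n ih =>
    rw [pow_succ', Module.End.mul_apply, ih, Y_single']
    simp

lemma evl_mon0 (hq : q ≠ 0) (k m : ℕ) :
    evl q s hq (mon q s (k, 0, m)) = Finsupp.single (k, (0 : Fin 2), m) 1 := by
  show rep q s hq (gx q s ^ k * gθ q s ^ (((0 : Fin 2) : Fin 2) : ℕ) * gy q s ^ m)
      (Finsupp.single (0, 0, 0) 1) = _
  rw [show (((0 : Fin 2) : Fin 2) : ℕ) = 0 from rfl, pow_zero, mul_one, map_mul, map_pow,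
    map_pow, rep_gx, rep_gy, Module.End.mul_apply, Ypow_single, Xpow_single, zero_add]

lemma evl_mon1 (hq : q ≠ 0) (k m : ℕ) :
    evl q s hq (mon q s (k, 1, m)) = Finsupp.single (k, (1 : Fin 2), m) 1 := by
  show rep q s hq (gx q s ^ k * gθ q s ^ (((1 : Fin 2) : Fin 2) : ℕ) * gy q s ^ m)
      (Finsupp.single (0, 0, 0) 1) = _
  rw [show (((1 : Fin 2) : Fin 2) : ℕ) = 1 from rfl, pow_one, map_mul, map_mul, map_pow,
    map_pow, rep_gx, rep_gθ, rep_gy, Module.End.mul_apply, Module.End.mul_apply, Ypow_single,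
    T_single0', pow_zero, mul_one, Xpow_single, zero_add]

lemma evl_mon (hq : q ≠ 0) (p : ℕ × Fin 2 × ℕ) :
    evl q s hq (mon q s p) = Finsupp.single p 1 := by
  obtain ⟨k, l, m⟩ := p
  fin_cases l
  · exact evl_mon0 q s hq k m
  · exact evl_mon1 q s hq k m

lemma rxθ : gx q s * gθ q s = q • (gθ q s * gx q s) := by
  simpa only [gx, gθ, gy, map_mul, map_smul] using RingQuot.mkAlgHom_rel K (SPRel.xθ (q := q) (s := s))

lemma rxy : gx q s * gy q s = (q ^ 2) • (gy q s * gx q s) := by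
  simpa only [gx, gθ, gy, map_mul, map_smul] using RingQuot.mkAlgHom_rel K (SPRel.xy (q := q) (s := s))

lemma ryθ : gy q s * gθ q s = q⁻¹ • (gθ q s * gy q s) := by
  simpa only [gx, gθ, gy, map_mul, map_smul] using RingQuot.mkAlgHom_rel K (SPRel.yθ (q := q) (s := s))

lemma rθθ : gθ q s * gθ q s = (s * (q - 1)) • (gy q s * gx q s) := by
  simpa only [gx, gθ, gy, map_mul, map_smul] using RingQuot.mkAlgHom_rel K (SPRel.θθ (q := q) (s := s))

lemma rθx (hq : q ≠ 0) : gθ q s * gx q s = q⁻¹ • (gx q s * gθ q s) := by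
  rw [rxθ, smul_smul, inv_mul_cancel₀ hq, one_smul]

lemma ryx (hq : q ≠ 0) : gy q s * gx q s = (q⁻¹ ^ 2) • (gx q s * gy q s) := by
  rw [rxy, smul_smul, show q⁻¹ ^ 2 * q ^ 2 = 1 by
    rw [← mul_pow, inv_mul_cancel₀ hq, one_pow], one_smul]

-- "tail" versions (right-associated)
lemma rθx' (hq : q ≠ 0) (c : RingQuot (SPRel q s)) :
    gθ q s * (gx q s * c) = q⁻¹ • (gx q s * (gθ q s * c)) := by
  rw [← mul_assoc, rθx q s hq, smul_mul_assoc, mul_assoc]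

lemma ryx' (hq : q ≠ 0) (c : RingQuot (SPRel q s)) :
    gy q s * (gx q s * c) = (q⁻¹ ^ 2) • (gx q s * (gy q s * c)) := by
  rw [← mul_assoc, ryx q s hq, smul_mul_assoc, mul_assoc]

lemma ryθ' (c : RingQuot (SPRel q s)) :
    gy q s * (gθ q s * c) = q⁻¹ • (gθ q s * (gy q s * c)) := by
  rw [← mul_assoc, ryθ, smul_mul_assoc, mul_assoc]

lemma rθθ' (c : RingQuot (SPRel q s)) :
    gθ q s * (gθ q s * c) = (s * (q - 1)) • (gy q s * (gx q s * c)) := by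
  rw [← mul_assoc, rθθ, smul_mul_assoc, mul_assoc]

lemma rypow_x (hq : q ≠ 0) (m : ℕ) :
    gy q s ^ m * gx q s = (q⁻¹ ^ (2 * m)) • (gx q s * gy q s ^ m) := by
  induction m with
  | zero => simp
  | succ n ih =>
    rw [pow_succ', mul_assoc, ih, mul_smul_comm, ← mul_assoc, ryx q s hq, smul_mul_assoc,
      smul_smul, mul_assoc, ← pow_succ', ← pow_add]
    congr 2 <;> omega

lemma rypow_θ (hq : q ≠ 0) (m : ℕ) :
    gy q s ^ m * gθ q s = (q⁻¹ ^ m) • (gθ q s * gy q s ^ m) := by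
  induction m with
  | zero => simp
  | succ n ih =>
    rw [pow_succ', mul_assoc, ih, mul_smul_comm, ← mul_assoc, ryθ, smul_mul_assoc,
      smul_smul, mul_assoc, ← pow_succ', ← pow_succ]

/-- The span of the monomials. -/
noncomputable def S : Submodule K (RingQuot (SPRel q s)) :=
  Submodule.span K (Set.range (mon q s))

lemma mon_mem (p : ℕ × Fin 2 × ℕ) : mon q s p ∈ S q s :=
  Submodule.subset_span ⟨p, rfl⟩

lemma one_mem_S : (1 : RingQuot (SPRel q s)) ∈ S q s := by
  have : mon q s (0, 0, 0) = 1 := by simp [mon]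
  rw [← this]; exact mon_mem q s _

lemma mon_mul_x (hq : q ≠ 0) (p : ℕ × Fin 2 × ℕ) : mon q s p * gx q s ∈ S q s := by
  obtain ⟨k, l, m⟩ := p
  fin_cases l
  · show mon q s (k, 0, m) * gx q s ∈ S q s
    have h : mon q s (k, 0, m) * gx q s = (q⁻¹ ^ (2 * m)) • mon q s (k + 1, 0, m) := by
      simp only [mon, Fin.isValue, Fin.val_zero, pow_zero, mul_one]
      rw [mul_assoc, rypow_x q s hq, mul_smul_comm, ← mul_assoc, ← pow_succ]
    rw [h]; exact Submodule.smul_mem _ _ (mon_mem q s _)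
  · show mon q s (k, 1, m) * gx q s ∈ S q s
    have h : mon q s (k, 1, m) * gx q s =
        (q⁻¹ ^ (2 * m) * q⁻¹) • mon q s (k + 1, 1, m) := by
      simp only [mon, Fin.isValue, Fin.val_one, pow_one]
      rw [mul_assoc, rypow_x q s hq, mul_smul_comm, mul_assoc, rθx' q s hq, mul_smul_comm,
        smul_smul, pow_succ, mul_assoc, mul_assoc]
    rw [h]; exact Submodule.smul_mem _ _ (mon_mem q s _)

lemma mon_mul_y (p : ℕ × Fin 2 × ℕ) : mon q s p * gy q s ∈ S q s := by
  obtain ⟨k, l, m⟩ := p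
  have h : mon q s (k, l, m) * gy q s = mon q s (k, l, m + 1) := by
    show gx q s ^ k * gθ q s ^ (l : ℕ) * gy q s ^ m * gy q s = _
    rw [mul_assoc, ← pow_succ]
    rfl
  rw [h]; exact mon_mem q s _

lemma mon_mul_θ (hq : q ≠ 0) (p : ℕ × Fin 2 × ℕ) : mon q s p * gθ q s ∈ S q s := by
  obtain ⟨k, l, m⟩ := p
  fin_cases l
  · show mon q s (k, 0, m) * gθ q s ∈ S q s
    have h : mon q s (k, 0, m) * gθ q s = (q⁻¹ ^ m) • mon q s (k, 1, m) := by
      simp only [mon, Fin.isValue, Fin.val_zero, Fin.val_one, pow_zero, pow_one, mul_one]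
      rw [mul_assoc, rypow_θ q s hq, mul_smul_comm, ← mul_assoc]
    rw [h]; exact Submodule.smul_mem _ _ (mon_mem q s _)
  · show mon q s (k, 1, m) * gθ q s ∈ S q s
    have h : mon q s (k, 1, m) * gθ q s =
        (q⁻¹ ^ m * (s * (q - 1)) * q⁻¹ ^ 2) • mon q s (k + 1, 0, m + 1) := by
      simp only [mon, Fin.isValue, Fin.val_zero, Fin.val_one, pow_zero, pow_one, mul_one]
      rw [mul_assoc, rypow_θ q s hq, mul_smul_comm, mul_assoc, rθθ' q s, mul_smul_comm,
        smul_smul, ryx' q s hq, mul_smul_comm, smul_smul, pow_succ (gx q s),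
        pow_succ' (gy q s), mul_assoc, mul_assoc, mul_assoc]
    rw [h]; exact Submodule.smul_mem _ _ (mon_mem q s _)

lemma mul_gen_mem (hq : q ≠ 0) (g : RingQuot (SPRel q s))
    (hg : ∀ p, mon q s p * g ∈ S q s) {v : RingQuot (SPRel q s)} (hv : v ∈ S q s) :
    v * g ∈ S q s := by
  induction hv using Submodule.span_induction with
  | mem w hw => obtain ⟨p, rfl⟩ := hw; exact hg p
  | zero => rw [zero_mul]; exact Submodule.zero_mem _
  | add a b _ _ ha hb => rw [add_mul]; exact Submodule.add_mem _ ha hb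
  | smul c a _ ha => rw [smul_mul_assoc]; exact Submodule.smul_mem _ _ ha

lemma span_top (hq : q ≠ 0) (a : RingQuot (SPRel q s)) : a ∈ S q s := by
  obtain ⟨w, rfl⟩ := RingQuot.mkAlgHom_surjective K (SPRel q s) a
  have key : ∀ w : FreeAlgebra K (Fin 3), ∀ v ∈ S q s,
      v * RingQuot.mkAlgHom K (SPRel q s) w ∈ S q s := by
    intro w
    induction w using FreeAlgebra.induction with
    | grade0 r =>
      intro v hv
      rw [AlgHom.commutes, Algebra.algebraMap_eq_smul_one, mul_smul_comm, mul_one]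
      exact Submodule.smul_mem _ _ hv
    | grade1 i =>
      intro v hv
      fin_cases i
      · exact mul_gen_mem q s hq _ (mon_mul_x q s hq) hv
      · exact mul_gen_mem q s hq _ (mon_mul_θ q s hq) hv
      · exact mul_gen_mem q s hq _ (mon_mul_y q s) hv
    | mul a b ha hb =>
      intro v hv
      rw [map_mul, ← mul_assoc]
      exact hb _ (ha _ hv)
    | add a b ha hb =>
      intro v hv
      rw [map_add, mul_add]
      exact Submodule.add_mem _ (ha _ hv) (hb _ hv)
  simpa using key w 1 (one_mem_S q s)

lemma evl_comp (hq : q ≠ 0) :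
    (evl q s hq).comp (Finsupp.linearCombination K (mon q s)) = LinearMap.id := by
  apply ext1
  intro p
  rw [LinearMap.comp_apply, linearCombination_single, one_smul, evl_mon, LinearMap.id_apply]

lemma inj_lc (hq : q ≠ 0) : Function.Injective (Finsupp.linearCombination K (mon q s)) := by
  intro u v h
  have := congrArg (evl q s hq) h
  rwa [← LinearMap.comp_apply, ← LinearMap.comp_apply, evl_comp q s hq, LinearMap.id_apply,
    LinearMap.id_apply] at this

lemma li_mon (hq : q ≠ 0) : LinearIndependent K (mon q s) :=
  inj_lc q s hq

lemma span_mon (hq : q ≠ 0) :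
    ⊤ ≤ Submodule.span K (Set.range (mon q s)) := fun a _ => span_top q s hq a

end SPAux

/-- the monomials `x^k θ^l y^m`, `(k,l,m) ∈ ℕ × {0,1} × ℕ`, form a
`K`-vector-space basis of `O(SP_q^{2|1})`. -/
theorem monomials_form_basis (K : Type*) [Field K] (q s : K) (hq : q ≠ 0) (hs : s ^ 2 = q) :
    let x := RingQuot.mkAlgHom K (SPRel q s) (FreeAlgebra.ι K 0)
    let θ := RingQuot.mkAlgHom K (SPRel q s) (FreeAlgebra.ι K 1)
    let y := RingQuot.mkAlgHom K (SPRel q s) (FreeAlgebra.ι K 2)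
    ∃ B : Module.Basis (ℕ × Fin 2 × ℕ) K (RingQuot (SPRel q s)),
      ∀ p : ℕ × Fin 2 × ℕ, B p = x ^ p.1 * θ ^ (p.2.1 : ℕ) * y ^ p.2.2 := by
  intro x θ y
  refine ⟨Module.Basis.mk (SPAux.li_mon q s hq) (SPAux.span_mon q s hq), fun p => ?_⟩
  rw [Module.Basis.mk_apply]
  rfl
end

section
/- Let q > 0 be a real number and work in the algebra O(SP_q^{2|1}) over the field ℂ with s = √q. Set X := √q · y, Θ := i · θ, and Y := (1/√q) · x (where i ∈ ℂ is the imaginary unit and x, θ, y are the images of the generators). Then the following identities hold: Θ·X = q·X·Θ, Θ·Y = q⁻¹·Y·Θ, and X·Y − Y·X = q^{−1/2}(q+1)·Θ². (These are exactly the images of the defining relations under the superinvolution x₊* = q^{1/2}x₋, θ* = iθ, x₋* = q^{−1/2}x₊, showing that the defining ideal is invariant under this ℤ₂-graded involution, so that O(SP_q^{2|1}) becomes a super *-algebra when q > 0.) -/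
/-- The defining relations of the quantum symplectic superspace algebra
`O(SP_q^{2|1})` over `ℂ`: generator `0` is `x`, generator `1` is `θ`,
generator `2` is `y`. -/
inductive SPRelC (q s : ℂ) : FreeAlgebra ℂ (Fin 3) → FreeAlgebra ℂ (Fin 3) → Prop
  | xθ : SPRelC q s (FreeAlgebra.ι ℂ 0 * FreeAlgebra.ι ℂ 1)
      (q • (FreeAlgebra.ι ℂ 1 * FreeAlgebra.ι ℂ 0))
  | xy : SPRelC q s (FreeAlgebra.ι ℂ 0 * FreeAlgebra.ι ℂ 2)
      ((q ^ 2) • (FreeAlgebra.ι ℂ 2 * FreeAlgebra.ι ℂ 0))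
  | yθ : SPRelC q s (FreeAlgebra.ι ℂ 2 * FreeAlgebra.ι ℂ 1)
      (q⁻¹ • (FreeAlgebra.ι ℂ 1 * FreeAlgebra.ι ℂ 2))
  | θθ : SPRelC q s (FreeAlgebra.ι ℂ 1 * FreeAlgebra.ι ℂ 1)
      ((s * (q - 1)) • (FreeAlgebra.ι ℂ 2 * FreeAlgebra.ι ℂ 0))

/-- for real `q > 0`, the images `X = √q·y`, `Θ = i·θ`, `Y = √q⁻¹·x` of the
generators under the superinvolution again satisfy the defining relations of
`O(SP_q^{2|1})`, so the defining ideal is `*`-invariant. -/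
theorem star_structure_relations (q : ℝ) (hq : 0 < q) :
    let x := RingQuot.mkAlgHom ℂ (SPRelC (q : ℂ) ((Real.sqrt q : ℝ) : ℂ)) (FreeAlgebra.ι ℂ 0)
    let θ := RingQuot.mkAlgHom ℂ (SPRelC (q : ℂ) ((Real.sqrt q : ℝ) : ℂ)) (FreeAlgebra.ι ℂ 1)
    let y := RingQuot.mkAlgHom ℂ (SPRelC (q : ℂ) ((Real.sqrt q : ℝ) : ℂ)) (FreeAlgebra.ι ℂ 2)
    let X := ((Real.sqrt q : ℝ) : ℂ) • y
    let Θ := Complex.I • θ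
    let Y := (((Real.sqrt q)⁻¹ : ℝ) : ℂ) • x
    Θ * X = (q : ℂ) • (X * Θ) ∧
    Θ * Y = ((q : ℂ))⁻¹ • (Y * Θ) ∧
    X * Y - Y * X = ((((Real.sqrt q)⁻¹ : ℝ) : ℂ) * ((q : ℂ) + 1)) • (Θ * Θ) := by
  intro x θ y X Θ Y
  have hq0 : (q : ℂ) ≠ 0 := by exact_mod_cast hq.ne'
  have hs0 : ((Real.sqrt q : ℝ) : ℂ) ≠ 0 := by
    exact_mod_cast (Real.sqrt_pos.mpr hq).ne'
  have hs2 : ((Real.sqrt q : ℝ) : ℂ) * ((Real.sqrt q : ℝ) : ℂ) = (q : ℂ) := by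
    rw [← Complex.ofReal_mul, Real.mul_self_sqrt hq.le]
  have h1 : x * θ = (q : ℂ) • (θ * x) := by
    simpa [map_mul, map_smul] using
      RingQuot.mkAlgHom_rel ℂ SPRelC.xθ
  have h2 : x * y = ((q : ℂ) ^ 2) • (y * x) := by
    simpa [map_mul, map_smul] using
      RingQuot.mkAlgHom_rel ℂ SPRelC.xy
  have h3 : y * θ = ((q : ℂ))⁻¹ • (θ * y) := by
    simpa [map_mul, map_smul] using
      RingQuot.mkAlgHom_rel ℂ SPRelC.yθ
  have h4 : θ * θ = (((Real.sqrt q : ℝ) : ℂ) * ((q : ℂ) - 1)) • (y * x) := by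
    simpa [map_mul, map_smul] using
      RingQuot.mkAlgHom_rel ℂ SPRelC.θθ
  have h3' : θ * y = (q : ℂ) • (y * θ) := by
    rw [h3, smul_smul, mul_inv_cancel₀ hq0, one_smul]
  have h1' : θ * x = ((q : ℂ))⁻¹ • (x * θ) := by
    rw [h1, smul_smul, inv_mul_cancel₀ hq0, one_smul]
  refine ⟨?_, ?_, ?_⟩
  · show Complex.I • θ * (((Real.sqrt q : ℝ) : ℂ) • y)
      = (q : ℂ) • (((Real.sqrt q : ℝ) : ℂ) • y * (Complex.I • θ))
    rw [smul_mul_smul_comm, h3', smul_mul_smul_comm, smul_smul, smul_smul]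
    ring_nf
  · show Complex.I • θ * ((((Real.sqrt q)⁻¹ : ℝ) : ℂ) • x)
      = ((q : ℂ))⁻¹ • ((((Real.sqrt q)⁻¹ : ℝ) : ℂ) • x * (Complex.I • θ))
    rw [smul_mul_smul_comm, h1', smul_mul_smul_comm, smul_smul, smul_smul]
    ring_nf
  · show ((Real.sqrt q : ℝ) : ℂ) • y * ((((Real.sqrt q)⁻¹ : ℝ) : ℂ) • x)
      - (((Real.sqrt q)⁻¹ : ℝ) : ℂ) • x * (((Real.sqrt q : ℝ) : ℂ) • y)
      = ((((Real.sqrt q)⁻¹ : ℝ) : ℂ) * ((q : ℂ) + 1)) • (Complex.I • θ * (Complex.I • θ))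
    rw [smul_mul_smul_comm, smul_mul_smul_comm, smul_mul_smul_comm, h2, h4]
    simp only [smul_smul]
    match_scalars
    rw [Complex.I_mul_I]
    field_simp
    ring_nf
end

section
/- Let K be a field, q ∈ K nonzero, and s ∈ K with s² = q. Let A be an associative unital K-algebra containing elements x, θ, y with x invertible (a unit with inverse x⁻¹), satisfying xθ = qθx, θy = qyθ, yx = q⁻²xy, and θ² = s(q−1)yx. Set X := x⁻¹, Θ := −θ, and Y := −x·y·x. Then: Θ·X = q·X·Θ, Θ·Y = q⁻¹·Y·Θ, and Y·X − X·Y = −s⁻¹(q+1)·Θ². (These identities are exactly what is needed for the antipode S(x₊) = x₊⁻¹, S(θ) = −θ, S(x₋) = −x₊x₋x₊ of the super-Hopf algebra F(SP_q^{2|1}) to be a well-defined ℤ₂-graded anti-homomorphism.) -/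
/-- in any associative unital `K`-algebra containing elements `x, θ, y`
with `x` invertible and satisfying the relations of `SP_q^{2|1}`, the antipode images
`X = x⁻¹`, `Θ = -θ`, `Y = -x·y·x` satisfy the relations needed for the antipode of
`F(SP_q^{2|1})` to be a well-defined ℤ₂-graded anti-homomorphism. -/
theorem antipode_relations (K : Type*) [Field K] (q s : K) (hq : q ≠ 0) (hs : s ^ 2 = q)
    (A : Type*) [Ring A] [Algebra K A] (x θ y xinv : A)
    (hxr : x * xinv = 1) (hxl : xinv * x = 1)
    (r1 : x * θ = q • (θ * x)) (r2 : θ * y = q • (y * θ))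
    (r3 : y * x = (q ^ 2)⁻¹ • (x * y)) (r4 : θ * θ = (s * (q - 1)) • (y * x)) :
    let X := xinv
    let Θ := -θ
    let Y := -(x * y * x)
    Θ * X = q • (X * Θ) ∧
    Θ * Y = q⁻¹ • (Y * Θ) ∧
    Y * X - X * Y = (-(s⁻¹ * (q + 1))) • (Θ * Θ) := by
  intro X Θ Y
  have hs0 : s ≠ 0 := by
    intro h
    apply hq
    rw [← hs, h]; ring
  -- θ * xinv = q • (xinv * θ)
  have h1 : θ * xinv = q • (xinv * θ) := by
    have h := congrArg (fun z => xinv * z * xinv) r1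
    simp only [mul_assoc, mul_smul_comm, smul_mul_assoc, hxr, mul_one] at h
    rw [← mul_assoc, hxl, one_mul] at h
    exact h
  -- θ * x = q⁻¹ • (x * θ)
  have h1' : θ * x = q⁻¹ • (x * θ) := by
    rw [r1, smul_smul, inv_mul_cancel₀ hq, one_smul]
  have h2 : θ * (x * y * x) = q⁻¹ • (x * y * x * θ) := by
    calc θ * (x * y * x) = (θ * x) * y * x := by noncomm_ring
      _ = q⁻¹ • (x * (θ * y) * x) := by rw [h1']; simp [smul_mul_assoc, mul_assoc]
      _ = q⁻¹ • (q • (x * (y * θ) * x)) := by rw [r2]; simp [mul_smul_comm, smul_mul_assoc]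
      _ = q⁻¹ • (q • (x * y * (θ * x))) := by congr 2; noncomm_ring
      _ = q⁻¹ • (q • (q⁻¹ • (x * y * (x * θ)))) := by
            rw [h1']; simp [mul_smul_comm]
      _ = q⁻¹ • (x * y * x * θ) := by
            rw [smul_smul, smul_smul]
            rw [show q⁻¹ * q * q⁻¹ = q⁻¹ by field_simp]
            congr 1; noncomm_ring
  refine ⟨?_, ?_, ?_⟩
  · show -θ * xinv = q • (xinv * -θ)
    calc -θ * xinv = -(θ * xinv) := by noncomm_ring
      _ = -(q • (xinv * θ)) := by rw [h1]
      _ = q • (xinv * -θ) := by simp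
  · show -θ * -(x * y * x) = q⁻¹ • (-(x * y * x) * -θ)
    calc -θ * -(x * y * x) = θ * (x * y * x) := by noncomm_ring
      _ = q⁻¹ • (x * y * x * θ) := h2
      _ = q⁻¹ • (-(x * y * x) * -θ) := by congr 1; noncomm_ring
  · show -(x * y * x) * xinv - xinv * -(x * y * x) = (-(s⁻¹ * (q + 1))) • (-θ * -θ)
    have e1 : -(x * y * x) * xinv = -(x * y) := by
      rw [neg_mul, mul_assoc, hxr, mul_one]
    have e2 : xinv * -(x * y * x) = -(y * x) := by
      rw [mul_neg, ← mul_assoc, ← mul_assoc, hxl, one_mul]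
    have e3 : -θ * -θ = (s * (q - 1)) • ((q ^ 2)⁻¹ • (x * y)) := by
      rw [neg_mul_neg, r4, r3]
    rw [e1, e2, e3, r3, smul_smul, smul_smul, sub_neg_eq_add]
    rw [show -(x * y) + (q ^ 2)⁻¹ • (x * y) = ((q ^ 2)⁻¹ - 1) • (x * y) by
          rw [sub_smul, one_smul]; abel]
    congr 1
    field_simp
    ring
end

section
/- Let K be a field, q ∈ K nonzero with q ≠ 1, and s ∈ K with s² = q. In the algebra O(SP_q^{2|1}), for every natural number k ≥ 1 the following identity holds (where x, θ, y denote the images of the generators): x^k · y − y · x^k = s⁻¹ · ((q^{2k} − 1)/(q − 1)) · θ² · x^{k−1}. -/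
/-- in `O(SP_q^{2|1})` with `q ≠ 1`, for every `k ≥ 1` one has
`x^k y - y x^k = s⁻¹ ((q^{2k} - 1)/(q - 1)) θ² x^{k-1}`. -/
theorem power_commutator_with_y (K : Type*) [Field K] (q s : K)
    (hq : q ≠ 0) (hq1 : q ≠ 1) (hs : s ^ 2 = q) :
    let x := RingQuot.mkAlgHom K (SPRel q s) (FreeAlgebra.ι K 0)
    let θ := RingQuot.mkAlgHom K (SPRel q s) (FreeAlgebra.ι K 1)
    let y := RingQuot.mkAlgHom K (SPRel q s) (FreeAlgebra.ι K 2)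
    ∀ k : ℕ, 1 ≤ k →
      x ^ k * y - y * x ^ k =
        (s⁻¹ * ((q ^ (2 * k) - 1) / (q - 1))) • (θ * θ * x ^ (k - 1)) := by
  intro x θ y k hk
  have hs0 : s ≠ 0 := by
    intro h; apply hq; rw [← hs, h]; ring
  have hq1' : q - 1 ≠ 0 := sub_ne_zero.mpr hq1
  -- relation x*y = q² • (y*x) in the quotient
  have hxy : x * y = (q ^ 2) • (y * x) := by
    have := RingQuot.mkAlgHom_rel K (SPRel.xy (q := q) (s := s))
    simpa [map_mul, map_smul] using this
  have hθθ : θ * θ = (s * (q - 1)) • (y * x) := by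
    have := RingQuot.mkAlgHom_rel K (SPRel.θθ (q := q) (s := s))
    simpa [map_mul, map_smul] using this
  -- x^n * y = q^(2n) • (y * x^n)
  have key : ∀ n : ℕ, x ^ n * y = (q ^ (2 * n)) • (y * x ^ n) := by
    intro n
    induction n with
    | zero => simp
    | succ n ih =>
      calc x ^ (n + 1) * y = x ^ n * (x * y) := by rw [pow_succ, mul_assoc]
        _ = (q ^ 2) • (x ^ n * y * x) := by
            rw [hxy, mul_smul_comm, mul_assoc]
        _ = (q ^ 2) • ((q ^ (2 * n)) • (y * x ^ n * x)) := by
            rw [ih, smul_mul_assoc]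
        _ = (q ^ (2 * (n + 1))) • (y * x ^ (n + 1)) := by
            rw [smul_smul, mul_assoc, ← pow_succ, ← pow_add]
            ring_nf
  obtain ⟨m, rfl⟩ : ∃ m, k = m + 1 := ⟨k - 1, (Nat.succ_pred_eq_of_pos hk).symm⟩
  have hx : x ^ (m + 1 - 1) = x ^ m := by norm_num
  rw [key, hθθ, smul_mul_assoc, smul_smul, hx]
  have hc : s⁻¹ * ((q ^ (2 * (m + 1)) - 1) / (q - 1)) * (s * (q - 1))
      = q ^ (2 * (m + 1)) - 1 := by
    field_simp
  rw [hc, mul_assoc, ← pow_succ']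
  rw [sub_smul, one_smul]
end

section
/- Let K be a field and h ∈ K. In the h-deformed algebra O(SP_h^{2|1}), the h-deformed supersphere r_h := h·X₊² − Θ² lies in the center; equivalently, r_h·X₊ = X₊·r_h, r_h·Θ = Θ·r_h, and r_h·X₋ = X₋·r_h (where X₊, Θ, X₋ denote the images of the generators in the quotient). -/
/-- The defining relations of the `h`-deformed symplectic superspace algebra
`O(SP_h^{2|1})`: generator `0` is `X₊`, generator `1` is `Θ`, generator `2` is `X₋`.
The relations are `X₊Θ = ΘX₊`, `X₋Θ = ΘX₋ - 2hΘX₊`, `X₊X₋ = X₋X₊ + 2Θ²`. -/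
inductive SPhRel {K : Type*} [Field K] (h : K) :
    FreeAlgebra K (Fin 3) → FreeAlgebra K (Fin 3) → Prop
  | r1 : SPhRel h (FreeAlgebra.ι K 0 * FreeAlgebra.ι K 1)
      (FreeAlgebra.ι K 1 * FreeAlgebra.ι K 0)
  | r2 : SPhRel h (FreeAlgebra.ι K 2 * FreeAlgebra.ι K 1)
      (FreeAlgebra.ι K 1 * FreeAlgebra.ι K 2
        - (2 * h) • (FreeAlgebra.ι K 1 * FreeAlgebra.ι K 0))
  | r3 : SPhRel h (FreeAlgebra.ι K 0 * FreeAlgebra.ι K 2)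
      (FreeAlgebra.ι K 2 * FreeAlgebra.ι K 0
        + (2 : K) • (FreeAlgebra.ι K 1 * FreeAlgebra.ι K 1))

/-- in `O(SP_h^{2|1})` the `h`-deformed supersphere
`r_h = hX₊² - Θ²` is central: it commutes with the generators `X₊`, `Θ`, `X₋`.
Here `Xp` denotes `X₊` and `Xm` denotes `X₋`. -/
theorem h_supersphere_central (K : Type*) [Field K] (h : K) :
    let Xp := RingQuot.mkAlgHom K (SPhRel h) (FreeAlgebra.ι K 0)
    let Θ := RingQuot.mkAlgHom K (SPhRel h) (FreeAlgebra.ι K 1)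
    let Xm := RingQuot.mkAlgHom K (SPhRel h) (FreeAlgebra.ι K 2)
    let r := h • (Xp * Xp) - Θ * Θ
    r ∈ Subalgebra.center K (RingQuot (SPhRel h)) ∧
      r * Xp = Xp * r ∧ r * Θ = Θ * r ∧ r * Xm = Xm * r := by
  intro Xp Θ Xm r
  have e1 : Xp * Θ = Θ * Xp := by
    have := RingQuot.mkAlgHom_rel K (SPhRel.r1 (h := h))
    simpa only [map_mul] using this
  have e2 : Xm * Θ = Θ * Xm - (2 * h) • (Θ * Xp) := by
    have := RingQuot.mkAlgHom_rel K (SPhRel.r2 (h := h))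
    simpa only [map_mul, map_sub, map_smul] using this
  have e3 : Xp * Xm = Xm * Xp + (2 : K) • (Θ * Θ) := by
    have := RingQuot.mkAlgHom_rel K (SPhRel.r3 (h := h))
    simpa only [map_mul, map_add, map_smul] using this
  -- moving Θ past Xm
  have e2' : Θ * Xm = Xm * Θ + (2 * h) • (Θ * Xp) := by
    rw [e2]; abel
  -- Θ² commutes with Xp
  have hθθp : Θ * Θ * Xp = Xp * (Θ * Θ) := by
    rw [mul_assoc, ← e1, ← mul_assoc, ← e1, mul_assoc]
  -- Xp² commutes with Θ
  have hppθ : Xp * Xp * Θ = Θ * (Xp * Xp) := by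
    rw [mul_assoc, e1, ← mul_assoc, e1, mul_assoc]
  -- Xp² past Xm
  have hA : Xp * Xp * Xm = Xm * (Xp * Xp) + (4 : K) • (Xp * (Θ * Θ)) := by
    rw [mul_assoc, e3, mul_add, mul_smul_comm, ← mul_assoc, e3, add_mul,
      smul_mul_assoc, mul_assoc Xm, hθθp]
    module
  -- Θ² past Xm
  have hB : Θ * Θ * Xm = Xm * (Θ * Θ) + (4 * h) • (Xp * (Θ * Θ)) := by
    rw [mul_assoc, e2', mul_add, mul_smul_comm, ← mul_assoc, e2', add_mul,
      smul_mul_assoc, mul_assoc Xm, ← e1, ← mul_assoc Θ Xp Θ, ← e1,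
      mul_assoc Xp Θ Θ]
    module
  have hcp : r * Xp = Xp * r := by
    show (h • (Xp * Xp) - Θ * Θ) * Xp = Xp * (h • (Xp * Xp) - Θ * Θ)
    rw [sub_mul, mul_sub, smul_mul_assoc, mul_smul_comm, hθθp, mul_assoc]
  have hcθ : r * Θ = Θ * r := by
    show (h • (Xp * Xp) - Θ * Θ) * Θ = Θ * (h • (Xp * Xp) - Θ * Θ)
    rw [sub_mul, mul_sub, smul_mul_assoc, mul_smul_comm, hppθ, mul_assoc]
  have hcm : r * Xm = Xm * r := by
    show (h • (Xp * Xp) - Θ * Θ) * Xm = Xm * (h • (Xp * Xp) - Θ * Θ)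
    rw [sub_mul, mul_sub, smul_mul_assoc, mul_smul_comm, hA, hB]
    module
  refine ⟨?_, hcp, hcθ, hcm⟩
  rw [Subalgebra.mem_center_iff]
  intro g
  obtain ⟨x, rfl⟩ := RingQuot.mkAlgHom_surjective K (SPhRel h) g
  induction x using FreeAlgebra.induction with
  | grade0 k =>
      rw [AlgHom.commutes]
      exact Algebra.commutes k r
  | grade1 i =>
      fin_cases i
      · exact hcp.symm
      · exact hcθ.symm
      · exact hcm.symm
  | mul a b ha hb =>
      rw [map_mul, mul_assoc, hb, ← mul_assoc, ha, mul_assoc]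
  | add a b ha hb =>
      rw [map_add, add_mul, mul_add, ha, hb]
end

section
/- Let K be a field, q ∈ K nonzero with q ≠ 1, s ∈ K with s² = q, and h ∈ K. In the algebra O(SP_q^{2|1}), set X₊ := x, Θ := θ, and X₋ := y − (h/(q−1))·x (where x, θ, y denote the images of the generators). Then the following identities hold: X₊·Θ = q·Θ·X₊, X₋·Θ = q⁻¹·Θ·X₋ − h·q⁻¹·(q+1)·Θ·X₊, and X₊·X₋ − X₋·X₊ = s⁻¹(q+1)·Θ². (These are the relations which, in the contraction limit q → 1, become the defining relations X₊Θ = ΘX₊, X₋Θ = ΘX₋ − 2hΘX₊, X₊X₋ − X₋X₊ = 2Θ² of the h-deformed superspace SP_h^{2|1}.) -/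
/-- in `O(SP_q^{2|1})` with `q ≠ 1`, the contracted coordinates
`Xp = x`, `Θ = θ`, `Xm = y - (h/(q-1))·x` satisfy the relations that become, in the
limit `q → 1`, the defining relations of the `h`-deformed superspace `SP_h^{2|1}`.
Here `Xp` denotes `X₊` and `Xm` denotes `X₋`. -/
theorem contraction_relations (K : Type*) [Field K] (q s h : K)
    (hq : q ≠ 0) (hq1 : q ≠ 1) (hs : s ^ 2 = q) :
    let x := RingQuot.mkAlgHom K (SPRel q s) (FreeAlgebra.ι K 0)
    let θ := RingQuot.mkAlgHom K (SPRel q s) (FreeAlgebra.ι K 1)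
    let y := RingQuot.mkAlgHom K (SPRel q s) (FreeAlgebra.ι K 2)
    let Xp := x
    let Θ := θ
    let Xm := y - (h / (q - 1)) • x
    Xp * Θ = q • (Θ * Xp) ∧
    Xm * Θ = q⁻¹ • (Θ * Xm) - (h * q⁻¹ * (q + 1)) • (Θ * Xp) ∧
    Xp * Xm - Xm * Xp = (s⁻¹ * (q + 1)) • (Θ * Θ) := by
  intro x θ y Xp Θ Xm
  have hq1' : q - 1 ≠ 0 := sub_ne_zero.mpr hq1
  have hsne : s ≠ 0 := by
    intro h0; apply hq; rw [← hs, h0]; ring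
  have r1 : x * θ = q • (θ * x) := by
    have := RingQuot.mkAlgHom_rel K (SPRel.xθ (q := q) (s := s))
    simpa [map_mul, map_smul] using this
  have r2 : x * y = (q ^ 2) • (y * x) := by
    have := RingQuot.mkAlgHom_rel K (SPRel.xy (q := q) (s := s))
    simpa [map_mul, map_smul] using this
  have r3 : y * θ = q⁻¹ • (θ * y) := by
    have := RingQuot.mkAlgHom_rel K (SPRel.yθ (q := q) (s := s))
    simpa [map_mul, map_smul] using this
  have r4 : θ * θ = (s * (q - 1)) • (y * x) := by
    have := RingQuot.mkAlgHom_rel K (SPRel.θθ (q := q) (s := s))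
    simpa [map_mul, map_smul] using this
  set c := h / (q - 1) with hcdef
  refine ⟨r1, ?_, ?_⟩
  · have hc : c * q = q⁻¹ * c + h * q⁻¹ * (q + 1) := by
      rw [hcdef]; field_simp; ring
    show (y - c • x) * θ = q⁻¹ • (θ * (y - c • x)) - (h * q⁻¹ * (q + 1)) • (θ * x)
    rw [sub_mul, smul_mul_assoc, r1, r3, mul_sub, mul_smul_comm, smul_sub,
      smul_smul, smul_smul, hc, add_smul, sub_sub]
  · show x * (y - c • x) - (y - c • x) * x = (s⁻¹ * (q + 1)) • (θ * θ)
    have hcoef : s⁻¹ * (q + 1) * (s * (q - 1)) = q ^ 2 - 1 := by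
      field_simp
      ring
    rw [mul_sub, sub_mul, mul_smul_comm, smul_mul_assoc, r2, r4, smul_smul, hcoef]
    module
end
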